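/- Let ν ∈ ℝ^d be a unit vector and, for η ∈ ℝ^d, write η_ν = η·ν and η_τ = η − η_ν ν. Let g_ν, g_τ: ℝ → ℝ satisfy 0 ≤ g_ν(r) ≤ ḡ_ν, 0 ≤ g_τ(r) ≤ ḡ_τ, |g_ν(r₁) − g_ν(r₂)| ≤ L_{g_ν}|r₁ − r₂| and |g_τ(r₁) − g_τ(r₂)| ≤ L_{g_τ}|r₁ − r₂| for all r, r₁, r₂ ∈ ℝ. Let j_τ: ℝ^d → ℝ satisfy |j_τ(ξ₁) − j_τ(ξ₂)| ≤ c_τ‖ξ₁ − ξ₂‖ and j_τ⁰(ξ₁; ξ₂ − ξ₁) + j_τ⁰(ξ₂; ξ₁ − ξ₂) ≤ α_τ‖ξ₁ − ξ₂‖² for all ξ₁, ξ₂ ∈ ℝ^d, with α_τ ≥ 0. Define j(η, ξ) = g_ν(η_ν) ξ_ν + g_τ(η_ν) j_τ(ξ_τ). Then for all η₁, η₂, ξ₁, ξ₂ ∈ ℝ^d: j₂⁰(η₁, ξ₁; ξ₂ − ξ₁) + j₂⁰(η₂, ξ₂; ξ₁ − ξ₂) ≤ ḡ_τ α_τ ‖ξ₁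 − ξ₂‖² + (L_{g_ν} + L_{g_τ} c_τ) ‖η₁ − η₂‖ ‖ξ₁ − ξ₂‖. -/

import Mathlib

open Filter

/-- Clarke generalized directional derivative. -/
noncomputable def clarkeDeriv {Y : Type*} [NormedAddCommGroup Y] [NormedSpace ℝ Y]
    (φ : Y → ℝ) (y z : Y) : ℝ :=
  Filter.limsup (fun p : Y × ℝ => (φ (p.1 + p.2 • z) - φ p.1) / p.2)
    ((nhds y) ×ˢ (nhdsWithin 0 (Set.Ioi 0)))

/-- Clarke subdifferential in a Euclidean space, identified with a set of vectors via
the inner ℝ product. -/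
def clarkeSubdiffE {d : ℕ} (φ : EuclideanSpace ℝ (Fin d) → ℝ)
    (y : EuclideanSpace ℝ (Fin d)) : Set (EuclideanSpace ℝ (Fin d)) :=
  {ξ | ∀ z, (inner ℝ ξ z : ℝ) ≤ clarkeDeriv φ y z}

/-- The contact superpotential `j(η, ξ) = g_ν(η_ν) ξ_ν + g_τ(η_ν) j_τ(ξ_τ)` where
`η_ν = η·ν` and `η_τ = η − η_ν ν`. -/
noncomputable def jcontact {d : ℕ} (ν : EuclideanSpace ℝ (Fin d))
    (gν gτ : ℝ → ℝ) (jτ : EuclideanSpace ℝ (Fin d) → ℝ)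
    (η ξ : EuclideanSpace ℝ (Fin d)) : ℝ :=
  gν (inner ℝ η ν) * (inner ℝ ξ ν : ℝ) +
    gτ (inner ℝ η ν) * jτ (ξ - (inner ℝ ξ ν : ℝ) • ν)

section helpers

variable {Y : Type*} [NormedAddCommGroup Y] [NormedSpace ℝ Y]

lemma quot_split (g G i1 iz r1 r2 t : ℝ) (ht : t ≠ 0) :
    (g * (i1 + t * iz) + G * r1 - (g * i1 + G * r2)) / t
      = g * iz + G * ((r1 - r2) / t) := by
  field_simp
  ring

/-- pointwise bound on difference quotients of a Lipschitz function -/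
lemma quot_abs_le {φ : Y → ℝ} {c : ℝ}
    (hφ : ∀ x y : Y, |φ x - φ y| ≤ c * ‖x - y‖) (v : Y)
    {t : ℝ} (ht : 0 < t) (w : Y) :
    |(φ (w + t • v) - φ w) / t| ≤ c * ‖v‖ := by
  rw [abs_div, abs_of_pos ht, div_le_iff₀ ht]
  calc |φ (w + t • v) - φ w| ≤ c * ‖(w + t • v) - w‖ := hφ _ _
    _ = c * ‖v‖ * t := by
        rw [add_sub_cancel_left, norm_smul, Real.norm_eq_abs, abs_of_pos ht]; ring

lemma eventually_pos_snd (y : Y) :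
    ∀ᶠ p : Y × ℝ in (nhds y) ×ˢ (nhdsWithin 0 (Set.Ioi 0)), 0 < p.2 :=
  Filter.Eventually.prod_inr (eventually_mem_nhdsWithin) _

lemma clarke_quot_bound {φ : Y → ℝ} {c : ℝ}
    (hφ : ∀ x y : Y, |φ x - φ y| ≤ c * ‖x - y‖) (y z : Y) :
    ∀ᶠ p : Y × ℝ in (nhds y) ×ˢ (nhdsWithin 0 (Set.Ioi 0)),
      |(φ (p.1 + p.2 • z) - φ p.1) / p.2| ≤ c * ‖z‖ := by
  filter_upwards [eventually_pos_snd y] with p hp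
  exact quot_abs_le hφ z hp p.1

lemma clarke_le {φ : Y → ℝ} {c : ℝ}
    (hφ : ∀ x y : Y, |φ x - φ y| ≤ c * ‖x - y‖) (y z : Y) :
    clarkeDeriv φ y z ≤ c * ‖z‖ := by
  have hb := clarke_quot_bound hφ y z
  refine limsup_le_of_le ?_ (hb.mono fun p hp => (abs_le.1 hp).2)
  exact isCoboundedUnder_le_of_eventually_le _ (hb.mono fun p hp => (abs_le.1 hp).1)

lemma clarke_ge {φ : Y → ℝ} {c : ℝ}
    (hφ : ∀ x y : Y, |φ x - φ y| ≤ c * ‖x - y‖) (y z : Y) :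
    -(c * ‖z‖) ≤ clarkeDeriv φ y z := by
  have hb := clarke_quot_bound hφ y z
  exact le_limsup_of_frequently_le ((hb.mono fun p hp => (abs_le.1 hp).1).frequently)
    ⟨c * ‖z‖, hb.mono fun p hp => (abs_le.1 hp).2⟩

lemma clarke_abs_le {φ : Y → ℝ} {c : ℝ}
    (hφ : ∀ x y : Y, |φ x - φ y| ≤ c * ‖x - y‖) (y z : Y) :
    |clarkeDeriv φ y z| ≤ c * ‖z‖ :=
  abs_le.2 ⟨clarke_ge hφ y z, clarke_le hφ y z⟩

end helpers

section euclid

variable {d : ℕ}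

local notation "E" => EuclideanSpace ℝ (Fin d)

lemma T_sub (ν x y : E) :
    (x - y) - (inner ℝ (x - y) ν : ℝ) • ν
      = (x - (inner ℝ x ν : ℝ) • ν) - (y - (inner ℝ y ν : ℝ) • ν) := by
  rw [inner_sub_left]
  module

lemma T_norm_le (ν : E) (hν : ‖ν‖ = 1) (x : E) :
    ‖x - (inner ℝ x ν : ℝ) • ν‖ ≤ ‖x‖ := by
  have h : ‖x - (inner ℝ x ν : ℝ) • ν‖ ^ 2 = ‖x‖ ^ 2 - (inner ℝ x ν : ℝ) ^ 2 := by
    rw [norm_sub_sq_real, real_inner_smul_right, norm_smul, Real.norm_eq_abs, hν,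
      mul_one, sq_abs]
    ring
  nlinarith [norm_nonneg (x - (inner ℝ x ν : ℝ) • ν), norm_nonneg x,
    sq_nonneg (inner ℝ x ν : ℝ)]

/-- key inequality: Clarke derivative of `jcontact` in the second variable. -/
lemma clarke_jcontact_le (ν : E) (gν gτ : ℝ → ℝ)
    (hgτ0 : ∀ r, 0 ≤ gτ r)
    (jτ : E → ℝ) (cτ : ℝ)
    (hjτ : ∀ ξ₁ ξ₂ : E, |jτ ξ₁ - jτ ξ₂| ≤ cτ * ‖ξ₁ - ξ₂‖)
    (η ξ z : E) :
    clarkeDeriv (jcontact ν gν gτ jτ η) ξ z ≤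
      gν (inner ℝ η ν) * (inner ℝ z ν : ℝ) +
        gτ (inner ℝ η ν) * clarkeDeriv jτ (ξ - (inner ℝ ξ ν : ℝ) • ν)
          (z - (inner ℝ z ν : ℝ) • ν) := by
  have hB0 : (0:ℝ) ≤ gτ (inner ℝ η ν) := hgτ0 _
  set A : ℝ := gν (inner ℝ η ν) * (inner ℝ z ν : ℝ) with hA
  set B : ℝ := gτ (inner ℝ η ν) with hB
  set Tz : E := z - (inner ℝ z ν : ℝ) • ν with hTz
  set Tξ : E := ξ - (inner ℝ ξ ν : ℝ) • ν with hTξ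
  set u : E × ℝ → ℝ := fun p => (jτ (p.1 + p.2 • Tz) - jτ p.1) / p.2 with hu
  set m : E × ℝ → E × ℝ := fun p => (p.1 - (inner ℝ p.1 ν : ℝ) • ν, p.2) with hm
  set F : Filter (E × ℝ) := (nhds ξ) ×ˢ (nhdsWithin 0 (Set.Ioi 0)) with hF
  set F' : Filter (E × ℝ) := (nhds Tξ) ×ˢ (nhdsWithin 0 (Set.Ioi 0)) with hF'
  set D : ℝ := clarkeDeriv jτ Tξ Tz with hD
  have hDlim : D = Filter.limsup u F' := rfl
  -- step 1 : rewrite the difference quotient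
  have hcongr : ∀ᶠ p : E × ℝ in F,
      (jcontact ν gν gτ jτ η (p.1 + p.2 • z) - jcontact ν gν gτ jτ η p.1) / p.2
        = A + B * u (m p) := by
    filter_upwards [eventually_pos_snd ξ] with p hp
    have hT : (p.1 + p.2 • z) - (inner ℝ (p.1 + p.2 • z) ν : ℝ) • ν
        = (p.1 - (inner ℝ p.1 ν : ℝ) • ν) + p.2 • Tz := by
      rw [inner_add_left, real_inner_smul_left, hTz]; module
    have hinner : (inner ℝ (p.1 + p.2 • z) ν : ℝ) = inner ℝ p.1 ν + p.2 * inner ℝ z ν := by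
      rw [inner_add_left, real_inner_smul_left]
    have e1 : jcontact ν gν gτ jτ η (p.1 + p.2 • z)
        = gν (inner ℝ η ν) * ((inner ℝ p.1 ν : ℝ) + p.2 * (inner ℝ z ν : ℝ))
          + B * jτ ((p.1 - (inner ℝ p.1 ν : ℝ) • ν) + p.2 • Tz) := by
      rw [jcontact, hT, hinner, hB]
    have e2 : jcontact ν gν gτ jτ η p.1
        = gν (inner ℝ η ν) * (inner ℝ p.1 ν : ℝ)
          + B * jτ (p.1 - (inner ℝ p.1 ν : ℝ) • ν) := rfl
    rw [e1, e2]
    have := quot_split (gν (inner ℝ η ν)) B (inner ℝ p.1 ν : ℝ) (inner ℝ z ν : ℝ)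
      (jτ ((p.1 - (inner ℝ p.1 ν : ℝ) • ν) + p.2 • Tz))
      (jτ (p.1 - (inner ℝ p.1 ν : ℝ) • ν)) p.2 hp.ne'
    rw [this]
  have hmapF : Filter.map m F ≤ F' := by
    have hcont : Continuous fun x : E => x - (inner ℝ x ν : ℝ) • ν :=
      continuous_id.sub ((continuous_id.inner (𝕜 := ℝ) continuous_const).smul continuous_const)
    have hmm : m = Prod.map (fun x : E => x - (inner ℝ x ν : ℝ) • ν) (id : ℝ → ℝ) := rfl
    rw [hmm, hF, hF', ← Filter.prod_map_map_eq', Filter.map_id]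
    exact Filter.prod_mono (hcont.tendsto ξ) le_rfl
  -- bound on u on the image filter
  have hubound : ∀ᶠ p : E × ℝ in Filter.map m F, |u p| ≤ cτ * ‖Tz‖ := by
    rw [Filter.eventually_map]
    filter_upwards [eventually_pos_snd ξ] with p hp
    exact quot_abs_le hjτ Tz hp _
  have hNeBot : (Filter.map m F).NeBot := Filter.NeBot.map inferInstance m
  -- assemble
  rw [clarkeDeriv, limsup_congr hcongr,
    show (fun p : E × ℝ => A + B * u (m p)) = (fun p : E × ℝ => A + B * u p) ∘ m from rfl,
    Filter.limsup_comp]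
  refine le_of_forall_pos_le_add fun ε hε => ?_
  have hε' : 0 < ε / (B + 1) := by positivity
  have hbdd : F'.IsBoundedUnder (· ≤ ·) u :=
    ⟨cτ * ‖Tz‖, (clarke_quot_bound hjτ Tξ Tz).mono fun p hp => (abs_le.1 hp).2⟩
  have hev : ∀ᶠ p : E × ℝ in F', u p < D + ε / (B + 1) := by
    refine eventually_lt_of_limsup_lt ?_ hbdd
    rw [← hDlim]; linarith
  have hev' : ∀ᶠ p : E × ℝ in Filter.map m F, u p < D + ε / (B + 1) := hmapF hev
  have hBe : B * (ε / (B + 1)) ≤ ε := by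
    rw [show B * (ε / (B + 1)) = ε * (B / (B + 1)) by ring]
    exact mul_le_of_le_one_right hε.le ((div_le_one (by linarith)).2 (by linarith))
  refine limsup_le_of_le ?_ (hev'.mono fun p hp => ?_)
  · refine isCoboundedUnder_le_of_eventually_le (x := A - B * (cτ * ‖Tz‖)) _
      (hubound.mono fun p hp => ?_)
    nlinarith [(abs_le.1 hp).1]
  · nlinarith [hp.le]

end euclid

/-- Pointwise relaxed-monotonicity estimate for the contact
superpotential `j`. -/
theorem jcontact_relaxed_monotonicity
    {d : ℕ} (ν : EuclideanSpace ℝ (Fin d)) (hν : ‖ν‖ = 1)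
    (gν gτ : ℝ → ℝ) (gbarν gbarτ : ℝ)
    (hgν : ∀ r : ℝ, 0 ≤ gν r ∧ gν r ≤ gbarν)
    (hgτ : ∀ r : ℝ, 0 ≤ gτ r ∧ gτ r ≤ gbarτ)
    (Lgν Lgτ : ℝ)
    (hgνlip : ∀ r₁ r₂ : ℝ, |gν r₁ - gν r₂| ≤ Lgν * |r₁ - r₂|)
    (hgτlip : ∀ r₁ r₂ : ℝ, |gτ r₁ - gτ r₂| ≤ Lgτ * |r₁ - r₂|)
    (jτ : EuclideanSpace ℝ (Fin d) → ℝ) (cτ : ℝ)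
    (hjτ : ∀ ξ₁ ξ₂ : EuclideanSpace ℝ (Fin d), |jτ ξ₁ - jτ ξ₂| ≤ cτ * ‖ξ₁ - ξ₂‖)
    (ατ : ℝ) (hατ : 0 ≤ ατ)
    (hjτmon : ∀ ξ₁ ξ₂ : EuclideanSpace ℝ (Fin d),
      clarkeDeriv jτ ξ₁ (ξ₂ - ξ₁) + clarkeDeriv jτ ξ₂ (ξ₁ - ξ₂) ≤ ατ * ‖ξ₁ - ξ₂‖ ^ 2) :
    ∀ η₁ η₂ ξ₁ ξ₂ : EuclideanSpace ℝ (Fin d),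
      clarkeDeriv (jcontact ν gν gτ jτ η₁) ξ₁ (ξ₂ - ξ₁) +
        clarkeDeriv (jcontact ν gν gτ jτ η₂) ξ₂ (ξ₁ - ξ₂) ≤
      gbarτ * ατ * ‖ξ₁ - ξ₂‖ ^ 2 + (Lgν + Lgτ * cτ) * ‖η₁ - η₂‖ * ‖ξ₁ - ξ₂‖ := by
  intro η₁ η₂ ξ₁ ξ₂
  have hgτ0 : ∀ r, 0 ≤ gτ r := fun r => (hgτ r).1
  have h1 := clarke_jcontact_le ν gν gτ hgτ0 jτ cτ hjτ η₁ ξ₁ (ξ₂ - ξ₁)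
  have h2 := clarke_jcontact_le ν gν gτ hgτ0 jτ cτ hjτ η₂ ξ₂ (ξ₁ - ξ₂)
  rw [T_sub ν ξ₂ ξ₁] at h1
  rw [T_sub ν ξ₁ ξ₂] at h2
  have hmon := hjτmon (ξ₁ - (inner ℝ ξ₁ ν : ℝ) • ν) (ξ₂ - (inner ℝ ξ₂ ν : ℝ) • ν)
  set c₁ : ℝ := (inner ℝ η₁ ν : ℝ) with hc₁
  set c₂ : ℝ := (inner ℝ η₂ ν : ℝ) with hc₂
  set a : ℝ := (inner ℝ (ξ₂ - ξ₁) ν : ℝ) with ha'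
  set D₁ : ℝ := clarkeDeriv jτ (ξ₁ - (inner ℝ ξ₁ ν : ℝ) • ν)
    ((ξ₂ - (inner ℝ ξ₂ ν : ℝ) • ν) - (ξ₁ - (inner ℝ ξ₁ ν : ℝ) • ν)) with hD₁
  set D₂ : ℝ := clarkeDeriv jτ (ξ₂ - (inner ℝ ξ₂ ν : ℝ) • ν)
    ((ξ₁ - (inner ℝ ξ₁ ν : ℝ) • ν) - (ξ₂ - (inner ℝ ξ₂ ν : ℝ) • ν)) with hD₂
  have hanneg : (inner ℝ (ξ₁ - ξ₂) ν : ℝ) = -a := by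
    rw [ha', show ξ₁ - ξ₂ = -(ξ₂ - ξ₁) by abel, inner_neg_left]
  rw [hanneg] at h2
  -- nonnegativity facts
  have hcτ : 0 ≤ cτ := by
    have h := hjτ ν 0
    rw [sub_zero, hν, mul_one] at h
    exact (abs_nonneg _).trans h
  have hLgν : 0 ≤ Lgν := by
    have h := hgνlip 0 1
    norm_num at h
    exact (abs_nonneg _).trans h
  have hLgτ : 0 ≤ Lgτ := by
    have h := hgτlip 0 1
    norm_num at h
    exact (abs_nonneg _).trans h
  have hgbarτ : 0 ≤ gbarτ := (hgτ 0).1.trans (hgτ 0).2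
  -- norm bounds
  have hT1 : ‖(ξ₂ - (inner ℝ ξ₂ ν : ℝ) • ν) - (ξ₁ - (inner ℝ ξ₁ ν : ℝ) • ν)‖ ≤ ‖ξ₁ - ξ₂‖ := by
    rw [← T_sub]
    exact (T_norm_le ν hν _).trans (norm_sub_rev ξ₂ ξ₁).le
  have hT2 : ‖(ξ₁ - (inner ℝ ξ₁ ν : ℝ) • ν) - (ξ₂ - (inner ℝ ξ₂ ν : ℝ) • ν)‖ ≤ ‖ξ₁ - ξ₂‖ := by
    rw [← T_sub]
    exact T_norm_le ν hν _
  have ha : |a| ≤ ‖ξ₁ - ξ₂‖ := by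
    calc |a| ≤ ‖ξ₂ - ξ₁‖ * ‖ν‖ := abs_real_inner_le_norm _ _
      _ = ‖ξ₁ - ξ₂‖ := by rw [hν, mul_one, norm_sub_rev]
  have hc : |c₁ - c₂| ≤ ‖η₁ - η₂‖ := by
    calc |c₁ - c₂| = |(inner ℝ (η₁ - η₂) ν : ℝ)| := by rw [inner_sub_left]
      _ ≤ ‖η₁ - η₂‖ * ‖ν‖ := abs_real_inner_le_norm _ _
      _ = ‖η₁ - η₂‖ := by rw [hν, mul_one]
  have hDabs : |D₁| ≤ cτ * ‖ξ₁ - ξ₂‖ :=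
    (clarke_abs_le hjτ _ _).trans (mul_le_mul_of_nonneg_left hT1 hcτ)
  -- the three main estimates
  have e1 : (gν c₁ - gν c₂) * a ≤ Lgν * ‖η₁ - η₂‖ * ‖ξ₁ - ξ₂‖ := by
    calc (gν c₁ - gν c₂) * a ≤ |(gν c₁ - gν c₂) * a| := le_abs_self _
      _ = |gν c₁ - gν c₂| * |a| := abs_mul _ _
      _ ≤ (Lgν * ‖η₁ - η₂‖) * ‖ξ₁ - ξ₂‖ :=
          mul_le_mul ((hgνlip c₁ c₂).trans (mul_le_mul_of_nonneg_left hc hLgν)) ha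
            (abs_nonneg _) (by positivity)
      _ = Lgν * ‖η₁ - η₂‖ * ‖ξ₁ - ξ₂‖ := by ring
  have e2 : (gτ c₁ - gτ c₂) * D₁ ≤ Lgτ * ‖η₁ - η₂‖ * (cτ * ‖ξ₁ - ξ₂‖) := by
    calc (gτ c₁ - gτ c₂) * D₁ ≤ |(gτ c₁ - gτ c₂) * D₁| := le_abs_self _
      _ = |gτ c₁ - gτ c₂| * |D₁| := abs_mul _ _
      _ ≤ (Lgτ * ‖η₁ - η₂‖) * (cτ * ‖ξ₁ - ξ₂‖) :=
          mul_le_mul ((hgτlip c₁ c₂).trans (mul_le_mul_of_nonneg_left hc hLgτ)) hDabs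
            (abs_nonneg _) (by positivity)
      _ = Lgτ * ‖η₁ - η₂‖ * (cτ * ‖ξ₁ - ξ₂‖) := by ring
  have e3 : gτ c₂ * (D₁ + D₂) ≤ gbarτ * (ατ * ‖ξ₁ - ξ₂‖ ^ 2) := by
    have hmon' : D₁ + D₂ ≤ ατ * ‖ξ₁ - ξ₂‖ ^ 2 := by
      refine hmon.trans (mul_le_mul_of_nonneg_left ?_ hατ)
      have := pow_le_pow_left₀ (norm_nonneg _) hT2 2
      linarith [this]
    calc gτ c₂ * (D₁ + D₂) ≤ gτ c₂ * (ατ * ‖ξ₁ - ξ₂‖ ^ 2) :=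
          mul_le_mul_of_nonneg_left hmon' (hgτ0 c₂)
      _ ≤ gbarτ * (ατ * ‖ξ₁ - ξ₂‖ ^ 2) :=
          mul_le_mul_of_nonneg_right (hgτ c₂).2 (by positivity)
  calc clarkeDeriv (jcontact ν gν gτ jτ η₁) ξ₁ (ξ₂ - ξ₁) +
        clarkeDeriv (jcontact ν gν gτ jτ η₂) ξ₂ (ξ₁ - ξ₂)
      ≤ (gν c₁ * a + gτ c₁ * D₁) + (gν c₂ * (-a) + gτ c₂ * D₂) := add_le_add h1 h2
    _ = (gν c₁ - gν c₂) * a + (gτ c₁ - gτ c₂) * D₁ + gτ c₂ * (D₁ + D₂) := by ring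
    _ ≤ gbarτ * ατ * ‖ξ₁ - ξ₂‖ ^ 2 + (Lgν + Lgτ * cτ) * ‖η₁ - η₂‖ * ‖ξ₁ - ξ₂‖ := by
        nlinarith [e1, e2, e3]
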